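/- In a flow graph G = (V, A, s) where every vertex is reachable from s, the dominator relation (u dominates v if every path from s to v contains u) is reflexive and transitive, and its transitive reduction is a tree rooted at s: every vertex v ≠ s has a unique immediate dominator d(v) ≠ v such that every dominator of v other than v itself also dominates d(v). -/

import Mathlib

universe u

variable {V : Type u}

attribute [local instance] Classical.propDecidable

/-- A flow graph: a directed graph with arc relation `A` and start vertex `s`. -/
structure FlowGraph (V : Type u) where
  A : V → V → Prop
  s : V

namespace FlowGraph

/-- `p` is a (directed) path from `a` to `b`: a nonempty list of vertices starting at `a`,
ending at `b`, with consecutive vertices joined by arcs. -/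
def IsPath (G : FlowGraph V) (p : List V) (a b : V) : Prop :=
  p ≠ [] ∧ p.head? = some a ∧ p.getLast? = some b ∧ p.Chain' G.A

def Reach (G : FlowGraph V) (a b : V) : Prop := ∃ p, G.IsPath p a b

/-- `u` dominates `v`: every path from the start vertex `s` to `v` contains `u`. -/
def Dom (G : FlowGraph V) (u v : V) : Prop :=
  ∀ p, G.IsPath p G.s v → u ∈ p

/-- Acyclic: no cycle of more than one vertex, i.e. no two distinct mutually reachable
vertices. -/
def Acyclic (G : FlowGraph V) : Prop :=
  ∀ a b, a ≠ b → ¬ (G.Reach a b ∧ G.Reach b a)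

/-- A spanning tree of `G` rooted at `s`, given by a parent function: every non-root
vertex has a tree arc from its parent, and the parent chain of every vertex reaches `s`. -/
structure SpanningTree (G : FlowGraph V) where
  parent : V → V
  parent_arc : ∀ v, v ≠ G.s → G.A (parent v) v
  parent_root : parent G.s = G.s
  root_reach : ∀ v, Relation.ReflTransGen (fun a b => parent a = b) v G.s

/-- `u` is an ancestor of `v` in the tree `T` (reflexively). -/
def Anc {G : FlowGraph V} (T : SpanningTree G) (u v : V) : Prop :=
  Relation.ReflTransGen (fun a b => T.parent a = b) v u

/-- Replace occurrences of `v` by `x`. -/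
noncomputable def repl (v x a : V) : V := if a = v then x else a

/-- Contraction of vertex `v` into vertex `x`: every arc end equal to `v` is replaced by `x`. -/
noncomputable def contract (G : FlowGraph V) (v x : V) : FlowGraph V where
  A a b := ∃ a' b', G.A a' b' ∧ a = repl v x a' ∧ b = repl v x b'
  s := G.s

/-- `x ∈ loop(u)`: `x` is a descendant of `u` in `T` with a path from `x` to `u` in `G`
containing only descendants of `u` in `T`. -/
def InLoop (G : FlowGraph V) (T : SpanningTree G) (u x : V) : Prop :=
  Anc T u x ∧ ∃ p, G.IsPath p x u ∧ ∀ y ∈ p, Anc T u y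

/-- `d` is an immediate-dominator function for `G`: for each `v ≠ s`, `d v ≠ v` is a
dominator of `v` and every dominator of `v` other than `v` itself dominates `d v`. -/
def IsIdom (G : FlowGraph V) (d : V → V) : Prop :=
  ∀ v, v ≠ G.s → d v ≠ v ∧ G.Dom (d v) v ∧
    ∀ u, G.Dom u v → u ≠ v → G.Dom u (d v)

end FlowGraph

open FlowGraph

section Aux

variable {G : FlowGraph V}

lemma aux_mem_of_getLast? {l : List V} {a : V} (h : l.getLast? = some a) : a ∈ l := by
  obtain ⟨h', rfl⟩ := List.mem_getLast?_eq_getLast h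
  exact List.getLast_mem h'

lemma aux_dom_refl (G : FlowGraph V) (v : V) : G.Dom v v :=
  fun _ hp => aux_mem_of_getLast? hp.2.2.1

lemma aux_s_dom (G : FlowGraph V) (v : V) : G.Dom G.s v :=
  fun _ hp => List.mem_of_mem_head? hp.2.1

lemma aux_path_prefix {p l1 l2 : List V} {a b u : V} (h : G.IsPath p a b)
    (he : p = l1 ++ u :: l2) : G.IsPath (l1 ++ [u]) a u := by
  obtain ⟨hne, hh, hl, hc⟩ := h
  subst he
  refine ⟨by simp, ?_, List.getLast?_concat, ?_⟩
  · rw [List.head?_append] at hh ⊢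
    simpa using hh
  · unfold List.Chain' at hc ⊢
    rw [List.isChain_append] at hc ⊢
    exact ⟨hc.1, List.isChain_singleton _, by simpa using hc.2.2⟩

lemma aux_path_suffix {p l1 l2 : List V} {a b u : V} (h : G.IsPath p a b)
    (he : p = l1 ++ u :: l2) : G.IsPath (u :: l2) u b := by
  obtain ⟨hne, hh, hl, hc⟩ := h
  subst he
  refine ⟨by simp, rfl, ?_, hc.suffix ⟨l1, rfl⟩⟩
  rwa [List.getLast?_append_cons] at hl

lemma aux_path_append {p q : List V} {a b c : V} (h1 : G.IsPath p a b)
    (h2 : G.IsPath q b c) : G.IsPath (p ++ q.tail) a c := by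
  obtain ⟨hne1, hh1, hl1, hc1⟩ := h1
  obtain ⟨hne2, hh2, hl2, hc2⟩ := h2
  rcases q with _ | ⟨b', t⟩
  · exact absurd rfl hne2
  obtain rfl : b' = b := by simpa using hh2
  refine ⟨by simp [hne1], ?_, ?_, ?_⟩
  · rw [List.head?_append, hh1]; rfl
  · rcases t with _ | ⟨x, t'⟩
    · simp only [List.tail_cons, List.append_nil, hl1]
      simpa using hl2
    · rw [List.tail_cons, List.getLast?_append_cons]
      rw [List.getLast?_cons_cons] at hl2
      exact hl2
  · unfold List.Chain'
    rw [List.isChain_append]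
    refine ⟨hc1, (List.isChain_cons.1 hc2).2, ?_⟩
    intro x hx y hy
    have hxb : b' = x := by rw [hl1] at hx; simpa using hx
    rw [← hxb]
    exact (List.isChain_cons.1 hc2).1 y hy

lemma aux_not_nodup_decomp {l : List V} (h : ¬ l.Nodup) :
    ∃ (x : V) (l1 l2 l3 : List V), l = l1 ++ x :: (l2 ++ x :: l3) := by
  induction l with
  | nil => simp at h
  | cons a t ih =>
    by_cases ha : a ∈ t
    · obtain ⟨l2, l3, rfl⟩ := List.append_of_mem ha
      exact ⟨a, [], l2, l3, rfl⟩
    · have ht : ¬ t.Nodup := fun hn => h (List.nodup_cons.2 ⟨ha, hn⟩)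
      obtain ⟨x, l1, l2, l3, rfl⟩ := ih ht
      exact ⟨x, a :: l1, l2, l3, rfl⟩

lemma aux_exists_nodup_path : ∀ (n : ℕ) (p : List V), p.length ≤ n → ∀ {a b : V},
    G.IsPath p a b → ∃ q, G.IsPath q a b ∧ q.Nodup := by
  intro n
  induction n with
  | zero =>
    intro p hl a b h
    rcases p with _ | _
    · exact absurd rfl h.1
    · simp at hl
  | succ n ih =>
    intro p hl a b h
    by_cases hnd : p.Nodup
    · exact ⟨p, h, hnd⟩
    obtain ⟨x, l1, l2, l3, rfl⟩ := aux_not_nodup_decomp hnd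
    have h1 : G.IsPath (l1 ++ [x]) a x := aux_path_prefix h rfl
    have h2 : G.IsPath (x :: l3) x b := aux_path_suffix (l1 := l1 ++ x :: l2) h (by simp)
    have h3 : G.IsPath ((l1 ++ [x]) ++ l3) a b := aux_path_append h1 h2
    refine ih ((l1 ++ [x]) ++ l3) ?_ h3
    have := hl
    simp only [List.length_append, List.length_cons, List.length_nil] at this ⊢
    omega

lemma aux_dom_trans {u v w : V} (huv : G.Dom u v) (hvw : G.Dom v w) : G.Dom u w := by
  intro p hp
  obtain ⟨l1, l2, rfl⟩ := List.append_of_mem (hvw p hp)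
  have hm := huv _ (aux_path_prefix hp rfl)
  rcases List.mem_append.1 hm with h | h
  · exact List.mem_append.2 (Or.inl h)
  · simp only [List.mem_singleton] at h
    subst h
    simp

lemma aux_dom_antisymm (G : FlowGraph V) (hreach : ∀ v, G.Reach G.s v) {x y : V}
    (hxy : G.Dom x y) (hyx : G.Dom y x) : x = y := by
  by_contra hne
  obtain ⟨q0, hq0⟩ := hreach x
  obtain ⟨q, hq, hqnd⟩ := aux_exists_nodup_path q0.length q0 le_rfl hq0
  obtain ⟨q1, q2, rfl⟩ := List.append_of_mem (hyx q hq)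
  have hx1 : x ∈ q1 := by
    have := hxy _ (aux_path_prefix hq rfl)
    rcases List.mem_append.1 this with h | h
    · exact h
    · simp only [List.mem_singleton] at h; exact absurd h hne
  have hx2 : x ∈ y :: q2 := by
    have := hq.2.2.1
    rw [List.getLast?_append_cons] at this
    exact aux_mem_of_getLast? this
  exact (List.disjoint_of_nodup_append hqnd) hx1 hx2

end Aux

/-- The dominator relation of a flow graph is reflexive and transitive, and every
vertex `v ≠ s` has a unique immediate dominator. -/
theorem stmt0 [Fintype V] (G : FlowGraph V) (hreach : ∀ v, G.Reach G.s v) :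
    (∀ v, G.Dom v v) ∧
    (∀ u v w, G.Dom u v → G.Dom v w → G.Dom u w) ∧
    (∀ v, v ≠ G.s → ∃! dv : V, dv ≠ v ∧ G.Dom dv v ∧
      ∀ u, G.Dom u v → u ≠ v → G.Dom u dv) := by
  haveI : DecidableEq V := fun a b => Classical.propDecidable _
  refine ⟨aux_dom_refl G, fun u v w => aux_dom_trans, ?_⟩
  intro v hv
  obtain ⟨r0, hr0⟩ := hreach v
  obtain ⟨r, hr, hrnd⟩ := aux_exists_nodup_path r0.length r0 le_rfl hr0
  set D : Finset V := Finset.univ.filter (fun u => G.Dom u v ∧ u ≠ v) with hD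
  have hsD : G.s ∈ D := by
    simp only [hD, Finset.mem_filter, Finset.mem_univ, true_and]
    exact ⟨aux_s_dom G v, Ne.symm hv⟩
  obtain ⟨d, hdD, hmax⟩ := Finset.exists_max_image D (fun u => r.idxOf u) ⟨_, hsD⟩
  simp only [hD, Finset.mem_filter, Finset.mem_univ, true_and] at hdD
  obtain ⟨hdv, hdnv⟩ := hdD
  have key : ∀ u, G.Dom u v → u ≠ v → G.Dom u d := by
    intro u hu hunv
    by_cases hud : u = d
    · subst hud; exact aux_dom_refl G u
    have huD : u ∈ D := by
      simp only [hD, Finset.mem_filter, Finset.mem_univ, true_and]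
      exact ⟨hu, hunv⟩
    have hmaxu : List.idxOf u r ≤ List.idxOf d r := hmax u huD
    have hdr : d ∈ r := hdv r hr
    obtain ⟨r1, r2, rfl⟩ := List.append_of_mem hdr
    have hdisj := List.disjoint_of_nodup_append hrnd
    have hd1 : d ∉ r1 := fun h => hdisj h List.mem_cons_self
    have hidxd : List.idxOf d (r1 ++ d :: r2) = r1.length := by
      rw [List.idxOf_append_of_notMem hd1, List.idxOf_cons_self]
      simp
    have hur2 : u ∉ r2 := by
      intro hu2
      have hu1 : u ∉ r1 := fun h => hdisj h (List.mem_cons.2 (Or.inr hu2))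
      have hidxu : List.idxOf u (r1 ++ d :: r2) =
          r1.length + (List.idxOf u r2).succ := by
        rw [List.idxOf_append_of_notMem hu1, List.idxOf_cons_ne _ (Ne.symm hud)]
      rw [hidxd, hidxu] at hmaxu
      omega
    have hsuf : G.IsPath (d :: r2) d v := aux_path_suffix hr rfl
    intro P hP
    by_contra huP
    have hQP : G.IsPath (P ++ r2) G.s v := aux_path_append hP hsuf
    rcases List.mem_append.1 (hu _ hQP) with h | h
    · exact huP h
    · exact hur2 h
  refine ⟨d, ⟨hdnv, hdv, key⟩, ?_⟩
  rintro d' ⟨hd'nv, hd'v, key'⟩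
  exact aux_dom_antisymm G hreach (key d' hd'v hd'nv) (key' d hdv hdnv)
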